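/- For every set X and all φ, ψ, ρ : X → Σ, one has ρ ≤ (x ↦ φ(x) → ψ(x)) if and only if (x ↦ ρ(x) ∧ φ(x)) ≤ ψ; that is, pointwise implication is a Heyting implication in the preorder (X → Σ, ≤). -/

import Mathlib

open CategoryTheory Encodable Denumerable

namespace Herbrand

/-- Kleene application in Kleene's first pca `K₁`: `e · n`. -/
def kap (e n : ℕ) : Part ℕ := Nat.Partrec.Code.eval (ofNat Nat.Partrec.Code e) n

/-- `kapIn r n S` : `r · n` is defined and its value lies in `S`. -/
def kapIn (r n : ℕ) (S : Set ℕ) : Prop := ∃ v ∈ kap r n, v ∈ S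

/-- The list coded by a natural number (canonical bijection `ℕ ≃ List ℕ`). -/
def toL (n : ℕ) : List ℕ := ofNat (List ℕ) n

/-- The code of a list of natural numbers. -/
def ofL (l : List ℕ) : ℕ := encode l

@[simp] lemma toL_ofL (l : List ℕ) : toL (ofL l) = l := ofNat_encode l

/-- `!A` : the set of codes of lists all of whose entries lie in `A`. -/
def bang (A : Set ℕ) : Set ℕ := {n | ∀ x ∈ toL n, x ∈ A}

/-- `m ⪯ n` : every entry of the list coded by `m` is an entry of the list coded by `n`. -/
def sle (m n : ℕ) : Prop := ∀ x ∈ toL m, x ∈ toL n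

lemma sle_refl (m : ℕ) : sle m m := fun _ hx => hx

lemma sle_trans {m n k : ℕ} (h1 : sle m n) (h2 : sle n k) : sle m k :=
  fun x hx => h2 x (h1 x hx)

/-- `S` is upward closed in `!A`. -/
def UpwardClosedIn (A S : Set ℕ) : Prop :=
  ∀ m ∈ S, ∀ n ∈ bang A, sle m n → n ∈ S

/-- `↑_{!A} S` : the set of `n ∈ !A` with `m ⪯ n` for some `m ∈ S`. -/
def upClo (A S : Set ℕ) : Set ℕ := {n | n ∈ bang A ∧ ∃ m ∈ S, sle m n}

lemma mem_bang_univ (n : ℕ) : n ∈ bang Set.univ := fun x _ => Set.mem_univ x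

/-- From a partial recursive function we get a `K₁`-code for it. -/
theorem exists_kap_eq {f : ℕ →. ℕ} (hf : Nat.Partrec f) : ∃ e, ∀ n, kap e n = f n := by
  obtain ⟨c, hc⟩ := Nat.Partrec.Code.exists_code.mp hf
  exact ⟨encode c, fun n => by simp [kap, hc]⟩


/-- A pair of sets of numbers: candidate Herbrand truth value `(X₀, X₁)`. -/
structure HPair where
  act : Set ℕ
  pot : Set ℕ

/-- `X` is a Herbrand truth value (an element of `Σ`): `X₀ ⊆ !X₁` and
`X₀` is upward closed in `!X₁`. -/
def HPair.IsSigma (X : HPair) : Prop :=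
  X.act ⊆ bang X.pot ∧ UpwardClosedIn X.pot X.act

/-- The preorder on `X → Σ` of the Herbrand tripos. -/
def hle {X : Type} (φ ψ : X → HPair) : Prop :=
  ∃ r : ℕ, ∀ x : X, ∀ n : ℕ,
    (n ∈ bang (φ x).pot → kapIn r n (bang (ψ x).pot)) ∧
    (n ∈ (φ x).act → kapIn r n (ψ x).act)

/-- `A & B = {Nat.pair 0 a : a ∈ A} ∪ {Nat.pair 1 b : b ∈ B}`. -/
def amp (A B : Set ℕ) : Set ℕ :=
  (fun a => Nat.pair 0 a) '' A ∪ (fun b => Nat.pair 1 b) '' B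

/-- `m_A`: the code of the list of all `a` with `Nat.pair 0 a` an entry of the list coded
by `m`. -/
def projL (m : ℕ) : ℕ :=
  ofL ((toL m).filterMap fun p => if p.unpair.1 = 0 then some p.unpair.2 else none)

/-- `m_B`: the code of the list of all `b` with `Nat.pair 1 b` an entry of the list coded
by `m`. -/
def projR (m : ℕ) : ℕ :=
  ofL ((toL m).filterMap fun p => if p.unpair.1 = 1 then some p.unpair.2 else none)

/-- Conjunction of Herbrand truth values. -/
def conj (A B : HPair) : HPair where
  act := {m | m ∈ bang (amp A.pot B.pot) ∧ projL m ∈ A.act ∧ projR m ∈ B.act}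
  pot := amp A.pot B.pot

/-- Disjunction of Herbrand truth values. -/
def disj (A B : HPair) : HPair where
  act := {m | m ∈ bang (amp A.pot B.pot) ∧ (projL m ∈ A.act ∨ projR m ∈ B.act)}
  pot := amp A.pot B.pot

/-- The potential realizers of an implication. -/
def implPot (A B : HPair) : Set ℕ := {c | ∀ m ∈ bang A.pot, kapIn c m (bang B.pot)}

/-- Implication of Herbrand truth values. -/
def impl (A B : HPair) : HPair where
  act := upClo (implPot A B)
    {n | ∃ c, n = ofL [c] ∧ c ∈ implPot A B ∧ ∀ m ∈ A.act, kapIn c m B.act}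
  pot := implPot A B

/-- The bottom Herbrand truth value `(∅, ∅)`. -/
def bot : HPair := ⟨∅, ∅⟩

/-- Negation of Herbrand truth values: `¬A = A → (∅, ∅)`. -/
def neg (A : HPair) : HPair := impl A bot


/- ### Auxiliary material -/

@[simp] lemma ofL_toL (n : ℕ) : ofL (toL n) = n := encode_ofNat n

lemma kap_encode (c : Nat.Partrec.Code) (n : ℕ) :
    kap (encode c) n = Nat.Partrec.Code.eval c n := by
  simp [kap, ofNat_encode]

lemma mem_toL_projL {x m : ℕ} : x ∈ toL (projL m) ↔ Nat.pair 0 x ∈ toL m := by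
  simp only [projL, toL_ofL, List.mem_filterMap]
  constructor
  · rintro ⟨p, hp, hf⟩
    split_ifs at hf with h0
    rw [Option.some_inj] at hf
    have hpe : p = Nat.pair 0 x := by
      rw [← hf, ← h0, Nat.pair_unpair]
    rwa [hpe] at hp
  · intro h
    exact ⟨Nat.pair 0 x, h, by simp⟩

lemma mem_toL_projR {x m : ℕ} : x ∈ toL (projR m) ↔ Nat.pair 1 x ∈ toL m := by
  simp only [projR, toL_ofL, List.mem_filterMap]
  constructor
  · rintro ⟨p, hp, hf⟩
    split_ifs at hf with h0
    rw [Option.some_inj] at hf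
    have hpe : p = Nat.pair 1 x := by
      rw [← hf, ← h0, Nat.pair_unpair]
    rwa [hpe] at hp
  · intro h
    exact ⟨Nat.pair 1 x, h, by simp⟩

lemma pair0_mem_amp {A B : Set ℕ} {a : ℕ} : Nat.pair 0 a ∈ amp A B ↔ a ∈ A := by
  constructor
  · rintro (⟨a', ha', h⟩ | ⟨b', hb', h⟩)
    · rw [Nat.pair_eq_pair] at h
      rwa [h.2] at ha'
    · rw [Nat.pair_eq_pair] at h
      exact absurd h.1 (by norm_num)
  · intro h; exact Or.inl ⟨a, h, rfl⟩

lemma pair1_mem_amp {A B : Set ℕ} {b : ℕ} : Nat.pair 1 b ∈ amp A B ↔ b ∈ B := by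
  constructor
  · rintro (⟨a', ha', h⟩ | ⟨b', hb', h⟩)
    · rw [Nat.pair_eq_pair] at h
      exact absurd h.1 (by norm_num)
    · rw [Nat.pair_eq_pair] at h
      rwa [h.2] at hb'
  · intro h; exact Or.inr ⟨b, h, rfl⟩

/-- Merging a pair of list codes into a code of a list over `A & B`. -/
def merge (n m : ℕ) : ℕ :=
  ofL (((toL n).map (Nat.pair 0)) ++ ((toL m).map (Nat.pair 1)))

lemma mem_toL_merge {x n m : ℕ} :
    x ∈ toL (merge n m) ↔ (∃ a ∈ toL n, x = Nat.pair 0 a) ∨ ∃ b ∈ toL m, x = Nat.pair 1 b := by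
  simp only [merge, toL_ofL, List.mem_append, List.mem_map]
  constructor
  · rintro (⟨a, ha, rfl⟩ | ⟨b, hb, rfl⟩)
    · exact Or.inl ⟨a, ha, rfl⟩
    · exact Or.inr ⟨b, hb, rfl⟩
  · rintro (⟨a, ha, rfl⟩ | ⟨b, hb, rfl⟩)
    · exact Or.inl ⟨a, ha, rfl⟩
    · exact Or.inr ⟨b, hb, rfl⟩

lemma projL_merge (n m : ℕ) : projL (merge n m) = n := by
  have : ((toL (merge n m)).filterMap
      fun p => if p.unpair.1 = 0 then some p.unpair.2 else none) = toL n := by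
    simp [merge, List.filterMap_append, List.filterMap_map, Function.comp_def]
  rw [projL, this, ofL_toL]

lemma projR_merge (n m : ℕ) : projR (merge n m) = m := by
  have : ((toL (merge n m)).filterMap
      fun p => if p.unpair.1 = 1 then some p.unpair.2 else none) = toL m := by
    simp [merge, List.filterMap_append, List.filterMap_map, Function.comp_def]
  rw [projR, this, ofL_toL]

/-- One step of the loop that applies each code in a list to a fixed argument and
accumulates the concatenation of the results. -/
def step : List ℕ × ℕ × ℕ →. ℕ ⊕ (List ℕ × ℕ × ℕ) := fun st =>
  match st.1 with
  | [] => Part.some (Sum.inl st.2.2)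
  | c :: rest =>
    (kap c st.2.1).map fun u => Sum.inr (rest, st.2.1, ofL (toL st.2.2 ++ toL u))

lemma step_partrec : Partrec step := by
  have htoL : Primrec toL := Primrec.ofNat (List ℕ)
  have hofL : Primrec ofL := Primrec.encode
  have hq : Primrec (fun st : List ℕ × ℕ × ℕ => st.2.1) := Primrec.fst.comp Primrec.snd
  have hacc : Primrec (fun st : List ℕ × ℕ × ℕ => st.2.2) := Primrec.snd.comp Primrec.snd
  have main : Partrec (fun st : List ℕ × ℕ × ℕ =>
      Option.casesOn (motive := fun _ => Part (ℕ ⊕ (List ℕ × ℕ × ℕ))) st.1.head?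
        (Part.some (Sum.inl st.2.2))
        (fun c => (kap c st.2.1).map fun u =>
          Sum.inr (st.1.tail, st.2.1, ofL (toL st.2.2 ++ toL u)))) := by
    apply Partrec.optionCasesOn_right
      (o := fun st : List ℕ × ℕ × ℕ => st.1.head?)
      (f := fun st : List ℕ × ℕ × ℕ => (Sum.inl st.2.2 : ℕ ⊕ (List ℕ × ℕ × ℕ)))
    · exact (Primrec.list_head?.comp Primrec.fst).to_comp
    · exact ((Primrec.sumInl (β := List ℕ × ℕ × ℕ)).comp hacc).to_comp
    · have heval : Partrec fun p : (List ℕ × ℕ × ℕ) × ℕ =>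
          Nat.Partrec.Code.eval (ofNat Nat.Partrec.Code p.2) p.1.2.1 :=
        Nat.Partrec.Code.eval_part.comp
          ((Computable.ofNat _).comp Computable.snd)
          ((hq.comp Primrec.fst).to_comp)
      have hpost : Computable₂ fun (p : (List ℕ × ℕ × ℕ) × ℕ) (u : ℕ) =>
          (Sum.inr (p.1.1.tail, p.1.2.1, ofL (toL p.1.2.2 ++ toL u))
            : ℕ ⊕ (List ℕ × ℕ × ℕ)) := by
        have h1 : Primrec fun (p : ((List ℕ × ℕ × ℕ) × ℕ) × ℕ) => p.1.1.1.tail :=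
          Primrec.list_tail.comp (Primrec.fst.comp (Primrec.fst.comp Primrec.fst))
        have h2 : Primrec fun (p : ((List ℕ × ℕ × ℕ) × ℕ) × ℕ) =>
            ofL (toL p.1.1.2.2 ++ toL p.2) :=
          hofL.comp (Primrec.list_append.comp
            (htoL.comp (hacc.comp (Primrec.fst.comp Primrec.fst)))
            (htoL.comp Primrec.snd))
        have h3 : Primrec fun (p : ((List ℕ × ℕ × ℕ) × ℕ) × ℕ) => p.1.1.2.1 :=
          hq.comp (Primrec.fst.comp Primrec.fst)
        exact (((Primrec.sumInr (α := ℕ) (β := List ℕ × ℕ × ℕ)).comp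
          (h1.pair (h3.pair h2))).to_comp).to₂
      exact (heval.map hpost).to₂
  apply main.of_eq
  intro st
  rcases st with ⟨l, q, acc⟩
  cases l <;> rfl

/-- Correctness of the loop: if every code in `l` halts on `q`, the loop terminates
with a value whose entries are exactly those of `acc` together with those of the
various results. -/
lemma loop_spec (q : ℕ) : ∀ (l : List ℕ) (acc : ℕ),
    (∀ c ∈ l, ∃ u, u ∈ kap c q) →
    ∃ v ∈ PFun.fix step (l, q, acc),
      (∀ x ∈ toL acc, x ∈ toL v) ∧
      (∀ c ∈ l, ∀ u ∈ kap c q, ∀ x ∈ toL u, x ∈ toL v) ∧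
      (∀ x ∈ toL v, x ∈ toL acc ∨ ∃ c ∈ l, ∃ u ∈ kap c q, x ∈ toL u) := by
  intro l
  induction l with
  | nil =>
    intro acc _
    refine ⟨acc, PFun.fix_stop ?_, fun x hx => hx, by simp, fun x hx => Or.inl hx⟩
    exact Part.mem_some _
  | cons c rest ih =>
    intro acc h
    obtain ⟨u, hu⟩ := h c (List.mem_cons_self)
    set acc' := ofL (toL acc ++ toL u) with hacc'
    obtain ⟨v, hv, hv1, hv2, hv3⟩ :=
      ih acc' (fun c' hc' => h c' (List.mem_cons_of_mem c hc'))
    have hstep : Sum.inr ((rest, q, acc') : List ℕ × ℕ × ℕ) ∈ step (c :: rest, q, acc) := by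
      exact (Part.mem_map_iff _).mpr ⟨u, hu, rfl⟩
    refine ⟨v, by rw [PFun.fix_fwd_eq hstep]; exact hv, ?_, ?_, ?_⟩
    · intro x hx
      exact hv1 x (by simp [hacc', hx])
    · intro c' hc' u' hu' x hx
      rcases List.mem_cons.mp hc' with rfl | hc'
      · have : u' = u := Part.mem_unique hu' hu
        subst this
        exact hv1 x (by simp [hacc', hx])
      · exact hv2 c' hc' u' hu' x hx
    · intro x hx
      rcases hv3 x hx with hx' | ⟨c', hc', u', hu', hx'⟩
      · rw [hacc', toL_ofL, List.mem_append] at hx'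
        rcases hx' with hx' | hx'
        · exact Or.inl hx'
        · exact Or.inr ⟨c, List.mem_cons_self, u, hu, hx'⟩
      · exact Or.inr ⟨c', List.mem_cons_of_mem c hc', u', hu', hx'⟩

/-- pointwise implication is a Heyting implication in the preorder
`(X → Σ, ≤)`. -/
theorem impl_is_heyting {X : Type} (φ ψ ρ : X → HPair)
    (hφ : ∀ x, (φ x).IsSigma) (hψ : ∀ x, (ψ x).IsSigma) (hρ : ∀ x, (ρ x).IsSigma) :
    hle ρ (fun x => impl (φ x) (ψ x)) ↔ hle (fun x => conj (ρ x) (φ x)) ψ := by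
  have hu1 : Primrec (fun n : ℕ => n.unpair.1) := Primrec.fst.comp Primrec.unpair
  have hu2 : Primrec (fun n : ℕ => n.unpair.2) := Primrec.snd.comp Primrec.unpair
  have htoL : Primrec toL := Primrec.ofNat (List ℕ)
  have hofL : Primrec ofL := Primrec.encode
  have hprojL : Primrec projL := by
    apply hofL.comp
    apply Primrec.listFilterMap htoL
    exact (Primrec.ite (Primrec.eq.comp (hu1.comp Primrec.snd) (Primrec.const 0))
      (Primrec.option_some.comp (hu2.comp Primrec.snd)) (Primrec.const none)).to₂
  have hprojR : Primrec projR := by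
    apply hofL.comp
    apply Primrec.listFilterMap htoL
    exact (Primrec.ite (Primrec.eq.comp (hu1.comp Primrec.snd) (Primrec.const 1))
      (Primrec.option_some.comp (hu2.comp Primrec.snd)) (Primrec.const none)).to₂
  constructor
  · rintro ⟨r, hr⟩
    -- the realizer: apply `r` to `m_ρ`, then apply each resulting code to `m_φ`
    -- and concatenate the results
    have hF : Partrec (fun m : ℕ => (kap r (projL m)).bind
        (fun a => PFun.fix step (toL a, projR m, ofL ([] : List ℕ)))) := by
      have h1 : Partrec (fun m : ℕ => kap r (projL m)) :=
        Nat.Partrec.Code.eval_part.comp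
          (Computable.const (ofNat Nat.Partrec.Code r)) hprojL.to_comp
      apply h1.bind
      have h2 : Computable (fun p : ℕ × ℕ =>
          ((toL p.2, projR p.1, ofL ([] : List ℕ)) : List ℕ × ℕ × ℕ)) :=
        (((Primrec.ofNat (List ℕ)).comp Primrec.snd).pair
          ((hprojR.comp Primrec.fst).pair
            (Primrec.const (ofL ([] : List ℕ))))).to_comp
      exact (step_partrec.fix.comp h2).to₂
    obtain ⟨s, hs⟩ := exists_kap_eq (Partrec.nat_iff.mp hF)
    refine ⟨s, fun x m => ⟨?_, ?_⟩⟩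
    · intro hm
      have hmρ : projL m ∈ bang (ρ x).pot :=
        fun a ha => pair0_mem_amp.mp (hm _ (mem_toL_projL.mp ha))
      have hmφ : projR m ∈ bang (φ x).pot :=
        fun b hb => pair1_mem_amp.mp (hm _ (mem_toL_projR.mp hb))
      obtain ⟨a, ha, haB⟩ := (hr x (projL m)).1 hmρ
      have hdom : ∀ c ∈ toL a, ∃ u, u ∈ kap c (projR m) := fun c hc =>
        let ⟨u, hu, _⟩ := haB c hc (projR m) hmφ
        ⟨u, hu⟩
      obtain ⟨v, hvfix, _, _, hv3⟩ := loop_spec (projR m) (toL a) (ofL []) hdom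
      refine ⟨v, by rw [hs]; exact Part.mem_bind_iff.mpr ⟨a, ha, hvfix⟩, ?_⟩
      intro y hy
      rcases hv3 y hy with hy' | ⟨c, hc, u, hu, hyu⟩
      · simp at hy'
      · obtain ⟨w, hw, hwB⟩ := haB c hc (projR m) hmφ
        have : u = w := Part.mem_unique hu hw
        subst this
        exact hwB y hyu
    · intro hm
      obtain ⟨hmB, hmL, hmR⟩ := hm
      have hmφ : projR m ∈ bang (φ x).pot :=
        fun b hb => pair1_mem_amp.mp (hmB _ (mem_toL_projR.mp hb))
      obtain ⟨a, ha, haA⟩ := (hr x (projL m)).2 hmL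
      obtain ⟨haB, m0, ⟨c, rfl, hcPot, hcAct⟩, hsle⟩ := haA
      have hdom : ∀ c' ∈ toL a, ∃ u, u ∈ kap c' (projR m) := fun c' hc' =>
        let ⟨u, hu, _⟩ := haB c' hc' (projR m) hmφ
        ⟨u, hu⟩
      obtain ⟨v, hvfix, _, hv2, hv3⟩ := loop_spec (projR m) (toL a) (ofL []) hdom
      refine ⟨v, by rw [hs]; exact Part.mem_bind_iff.mpr ⟨a, ha, hvfix⟩, ?_⟩
      have hca : c ∈ toL a := hsle c (by simp)
      obtain ⟨u, hu, huact⟩ := hcAct (projR m) hmR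
      have hvB : v ∈ bang (ψ x).pot := by
        intro y hy
        rcases hv3 y hy with hy' | ⟨c', hc', u', hu', hyu'⟩
        · simp at hy'
        · obtain ⟨w, hw, hwB⟩ := haB c' hc' (projR m) hmφ
          have : u' = w := Part.mem_unique hu' hw
          subst this
          exact hwB y hyu'
      exact (hψ x).2 u huact v hvB (fun y hy => hv2 c hca u hu y hy)
  · rintro ⟨s, hs⟩
    have hmerge : Primrec (fun p : ℕ × ℕ => merge p.1 p.2) := by
      apply hofL.comp
      apply Primrec.list_append.comp
      · exact Primrec.list_map (htoL.comp Primrec.fst)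
          ((Primrec₂.natPair.comp (Primrec.const 0) Primrec.snd).to₂)
      · exact Primrec.list_map (htoL.comp Primrec.snd)
          ((Primrec₂.natPair.comp (Primrec.const 1) Primrec.snd).to₂)
    have hg : Partrec (fun p : ℕ => kap s (merge p.unpair.1 p.unpair.2)) :=
      Nat.Partrec.Code.eval_part.comp
        (Computable.const (ofNat Nat.Partrec.Code s))
        (hmerge.comp Primrec.unpair).to_comp
    obtain ⟨c₀, hc₀⟩ := Nat.Partrec.Code.exists_code.mp (Partrec.nat_iff.mp hg)
    set cn : ℕ → ℕ := fun n => encode (c₀.curry n) with hcn_def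
    have hcn : ∀ n m', kap (cn n) m' = kap s (merge n m') := by
      intro n m'
      rw [hcn_def, kap_encode, Nat.Partrec.Code.eval_curry, hc₀]
      simp
    have hrtot : Partrec (fun n : ℕ => (Part.some (ofL [cn n]) : Part ℕ)) := by
      apply Computable.partrec
      exact (hofL.comp (Primrec.list_cons.comp
        (Primrec.encode.comp
          (Nat.Partrec.Code.primrec₂_curry.comp (Primrec.const c₀) Primrec.id))
        (Primrec.const []))).to_comp
    obtain ⟨r, hr⟩ := exists_kap_eq (Partrec.nat_iff.mp hrtot)
    have hmergeB : ∀ {x : X} {n m' : ℕ}, n ∈ bang (ρ x).pot → m' ∈ bang (φ x).pot →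
        merge n m' ∈ bang (amp (ρ x).pot (φ x).pot) := by
      intro x n m' hn hm' y hy
      rcases mem_toL_merge.mp hy with ⟨a, ha, rfl⟩ | ⟨b, hb, rfl⟩
      · exact pair0_mem_amp.mpr (hn a ha)
      · exact pair1_mem_amp.mpr (hm' b hb)
    refine ⟨r, fun x n => ⟨?_, ?_⟩⟩
    · intro hn
      refine ⟨ofL [cn n], by rw [hr]; exact Part.mem_some _, ?_⟩
      intro e he
      rw [toL_ofL, List.mem_singleton] at he
      subst he
      intro m' hm'
      simp only [kapIn, hcn]
      exact (hs x (merge n m')).1 (hmergeB hn hm')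
    · intro hn
      have hnB : n ∈ bang (ρ x).pot := (hρ x).1 hn
      refine ⟨ofL [cn n], by rw [hr]; exact Part.mem_some _, ?_⟩
      have hcnPot : cn n ∈ implPot (φ x) (ψ x) := by
        intro m' hm'
        simp only [kapIn, hcn]
        exact (hs x (merge n m')).1 (hmergeB hnB hm')
      refine ⟨?_, ofL [cn n], ⟨cn n, rfl, hcnPot, ?_⟩, sle_refl _⟩
      · intro e he
        rw [toL_ofL, List.mem_singleton] at he
        subst he
        exact hcnPot
      · intro m' hm'
        have hma : merge n m' ∈ (conj (ρ x) (φ x)).act :=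
          ⟨hmergeB hnB ((hφ x).1 hm'),
            by rw [projL_merge]; exact hn, by rw [projR_merge]; exact hm'⟩
        simpa only [kapIn, hcn] using (hs x (merge n m')).2 hma


end Herbrand
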